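/- Fix λ > 0. For each positive integer j let n_j = 2j, b_j = λ/(4(n_j+1)), and define f_j : [0,∞) → ℝ by f_j(x) = b_j x² · e^{−b_j x²/2} · ∑_{i=0}^{n_j−1} (−1)^i binom(n_j, n_j−1−i) (b_j x²)^i / i!. Then, as j → ∞, f_j converges uniformly on every compact subset of [0,∞) to the function x ↦ (√λ·x/2)·J₁(√λ·x), where J₁(y) = ∑_{m=0}^∞ (−1)^m (y/2)^{2m+1}/(m!·(m+1)!). -/

import Mathlib

set_option maxHeartbeats 1000000

open Real Filter Topology

lemma aux_prod_lb (m : ℕ) (x : ℕ → ℝ) (h0 : ∀ k, 0 ≤ x k) (h1 : ∀ k, x k ≤ 1) :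
    1 - ∑ k ∈ Finset.range m, x k ≤ ∏ k ∈ Finset.range m, (1 - x k) := by
  induction m with
  | zero => simp
  | succ m ih =>
    rw [Finset.sum_range_succ, Finset.prod_range_succ]
    have hP0 : (0:ℝ) ≤ ∏ k ∈ Finset.range m, (1 - x k) :=
      Finset.prod_nonneg fun k _ => by linarith [h1 k]
    have hP1 : (∏ k ∈ Finset.range m, (1 - x k)) ≤ 1 :=
      Finset.prod_le_one (fun k _ => by linarith [h1 k]) (fun k _ => by linarith [h0 k])
    nlinarith [mul_nonneg (h0 m) (sub_nonneg.mpr hP1)]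

lemma aux_prod_ub (m : ℕ) (x : ℕ → ℝ) (h0 : ∀ k, 0 ≤ x k) (h1 : ∀ k, x k ≤ 1) :
    ∏ k ∈ Finset.range m, (1 - x k) ≤ 1 :=
  Finset.prod_le_one (fun k _ => by linarith [h1 k]) (fun k _ => by linarith [h0 k])

lemma aux_gauss (m : ℕ) : ∑ k ∈ Finset.range m, ((k:ℝ)+1) = m*(m+1)/2 := by
  induction m with
  | zero => simp
  | succ m ih => rw [Finset.sum_range_succ, ih]; push_cast; ring

lemma aux_coeff_eq (N i : ℕ) (hi : i < N) :
    (N.choose (i+1) : ℝ)/((N:ℝ)+1)^(i+1)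
      = (∏ k ∈ Finset.range (i+1), (1 - ((k:ℝ)+1)/((N:ℝ)+1))) / (i+1).factorial := by
  have hN1 : (0:ℝ) < (N:ℝ)+1 := by positivity
  have h1 : ∀ k ∈ Finset.range (i+1), (1 - ((k:ℝ)+1)/((N:ℝ)+1)) = ((N:ℝ)-k)/((N:ℝ)+1) := by
    intro k _; field_simp; ring
  rw [Finset.prod_congr rfl h1, Finset.prod_div_distrib, Finset.prod_const]
  have hdesc : ((N.descFactorial (i+1) : ℕ) : ℝ) = ∏ k ∈ Finset.range (i+1), ((N:ℝ)-k) := by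
    rw [Nat.descFactorial_eq_prod_range, Nat.cast_prod]
    refine Finset.prod_congr rfl fun k hk => ?_
    rw [Finset.mem_range] at hk
    rw [Nat.cast_sub (by omega)]
  have hfac : ((N.descFactorial (i+1) : ℕ) : ℝ) = (i+1).factorial * N.choose (i+1) := by
    rw [Nat.descFactorial_eq_factorial_mul_choose]; push_cast; ring
  rw [← hdesc, hfac, Finset.card_range]
  have hfp : (0:ℝ) < ((i+1).factorial : ℝ) := by positivity
  field_simp

lemma aux_coeff_bound (N i : ℕ) (hi : i < N) :
    (N.choose (i+1) : ℝ)/((N:ℝ)+1)^(i+1) ≤ 1/(i+1).factorial ∧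
    1/((i+1).factorial:ℝ) - (N.choose (i+1):ℝ)/((N:ℝ)+1)^(i+1)
      ≤ ((i:ℝ)+2)/(2*((N:ℝ)+1)* i.factorial) := by
  have hN1 : (0:ℝ) < (N:ℝ)+1 := by positivity
  set x : ℕ → ℝ := fun k => ((k:ℝ)+1)/((N:ℝ)+1) with hx
  have h0 : ∀ k, 0 ≤ x k := fun k => by positivity
  have h1 : ∀ k ∈ Finset.range (i+1), x k ≤ 1 := by
    intro k hk
    rw [Finset.mem_range] at hk
    rw [hx, div_le_one hN1]
    have : (k:ℝ) ≤ (N:ℝ) := by exact_mod_cast Nat.le_of_lt_succ (by omega)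
    linarith
  -- redefine to total bound for the lemmas
  set x' : ℕ → ℝ := fun k => min (x k) 1 with hx'
  have hxx : ∀ k ∈ Finset.range (i+1), x' k = x k := fun k hk => min_eq_left (h1 k hk)
  have hP := aux_prod_lb (i+1) x' (fun k => le_min (h0 k) zero_le_one) (fun k => min_le_right _ _)
  have hPu := aux_prod_ub (i+1) x' (fun k => le_min (h0 k) zero_le_one) (fun k => min_le_right _ _)
  rw [Finset.prod_congr rfl (fun k hk => by rw [hxx k hk]),
    Finset.sum_congr rfl hxx] at hP
  rw [Finset.prod_congr rfl (fun k hk => by rw [hxx k hk])] at hPu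
  have hsum : ∑ k ∈ Finset.range (i+1), x k = ((i:ℝ)+1)*((i:ℝ)+2)/(2*((N:ℝ)+1)) := by
    rw [hx]
    rw [← Finset.sum_div, aux_gauss (i+1)]
    push_cast; rw [div_div]; ring
  have heq := aux_coeff_eq N i hi
  have hfp : (0:ℝ) < ((i+1).factorial : ℝ) := by positivity
  have hfp' : (0:ℝ) < ((i).factorial : ℝ) := by positivity
  have hfs : ((i+1).factorial : ℝ) = ((i:ℝ)+1) * (i.factorial : ℝ) := by
    rw [Nat.factorial_succ]; push_cast; ring
  constructor
  · rw [heq, div_le_div_iff₀ hfp hfp]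
    nlinarith [hPu]
  · rw [hsum] at hP
    have h2 : 1 - (∏ k ∈ Finset.range (i+1), (1 - x k)) ≤ ((i:ℝ)+1)*((i:ℝ)+2)/(2*((N:ℝ)+1)) := by
      linarith
    calc 1/((i+1).factorial:ℝ) - (N.choose (i+1):ℝ)/((N:ℝ)+1)^(i+1)
        = (1 - (∏ k ∈ Finset.range (i+1), (1 - x k)))/((i+1).factorial:ℝ) := by
          rw [heq]; rw [hx]; ring
      _ ≤ (((i:ℝ)+1)*((i:ℝ)+2)/(2*((N:ℝ)+1)))/((i+1).factorial:ℝ) := by gcongr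
      _ = ((i:ℝ)+2)/(2*((N:ℝ)+1)* i.factorial) := by
          rw [hfs]; field_simp

lemma aux_key (M t : ℝ) (hM : 0 ≤ M) (ht0 : 0 ≤ t) (htM : t ≤ M) (N : ℕ) :
    |(∑' i:ℕ, (-1:ℝ)^i * t^(i+1) / ((i.factorial:ℝ) * ((i+1).factorial:ℝ)))
      - Real.exp (-(t/((N:ℝ)+1))/2) * ∑ i ∈ Finset.range N,
          ((-1:ℝ)^i * ((N.choose (i+1)):ℝ) * t^(i+1) / (((N:ℝ)+1)^(i+1) * (i.factorial:ℝ)))|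
    ≤ (∑' i:ℕ, ((i:ℝ)+2) * M^(i+1) / ((i.factorial:ℝ))^2)/(2*((N:ℝ)+1))
      + M * (∑' i:ℕ, M^(i+N)/(((i+N).factorial:ℝ)))
      + (M/(2*((N:ℝ)+1))) * (M * (∑' i:ℕ, M^i/(i.factorial:ℝ))) := by
  have hN1 : (0:ℝ) < (N:ℝ)+1 := by positivity
  set a : ℕ → ℝ := fun i => (-1:ℝ)^i * t^(i+1) / ((i.factorial:ℝ) * ((i+1).factorial:ℝ)) with ha
  set term : ℕ → ℝ := fun i =>
    (-1:ℝ)^i * ((N.choose (i+1)):ℝ) * t^(i+1) / (((N:ℝ)+1)^(i+1) * (i.factorial:ℝ)) with hterm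
  have hsum_exp : Summable (fun i : ℕ => M^i / (i.factorial:ℝ)) :=
    Real.summable_pow_div_factorial M
  -- bound |a i|
  have b1 : ∀ i : ℕ, |a i| ≤ M * (M^i / (i.factorial:ℝ)) := by
    intro i
    have hfp : (0:ℝ) < (i.factorial:ℝ) := by positivity
    have hfp1 : (1:ℝ) ≤ ((i+1).factorial:ℝ) := by exact_mod_cast Nat.one_le_iff_ne_zero.mpr (Nat.factorial_ne_zero _)
    have habs : |a i| = t^(i+1) / ((i.factorial:ℝ) * ((i+1).factorial:ℝ)) := by
      rw [ha]
      rw [abs_div, abs_mul, abs_pow, abs_neg, abs_one, one_pow, one_mul, abs_pow,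
        abs_of_nonneg ht0, abs_of_nonneg (by positivity)]
    rw [habs]
    have h1 : t^(i+1) ≤ M^(i+1) := pow_le_pow_left₀ ht0 htM _
    calc t^(i+1) / ((i.factorial:ℝ) * ((i+1).factorial:ℝ))
        ≤ M^(i+1) / ((i.factorial:ℝ) * 1) :=
          div_le_div₀ (by positivity) h1 (by positivity) (by nlinarith)
      _ = M * (M^i / (i.factorial:ℝ)) := by rw [pow_succ]; ring
  -- bound |term i| for i < N
  have b2 : ∀ i ∈ Finset.range N, |term i| ≤ M * (M^i / (i.factorial:ℝ)) := by
    intro i hi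
    rw [Finset.mem_range] at hi
    have hc := (aux_coeff_bound N i hi).1
    have hfp : (0:ℝ) < (i.factorial:ℝ) := by positivity
    have hfp1 : (1:ℝ) ≤ ((i+1).factorial:ℝ) := by exact_mod_cast Nat.one_le_iff_ne_zero.mpr (Nat.factorial_ne_zero _)
    have habs : |term i| = ((N.choose (i+1)):ℝ) * t^(i+1) / (((N:ℝ)+1)^(i+1) * (i.factorial:ℝ)) := by
      rw [hterm]
      rw [abs_div, abs_mul, abs_mul, abs_pow, abs_neg, abs_one, one_pow, one_mul, abs_pow,
        abs_of_nonneg ht0, abs_of_nonneg (by positivity : (0:ℝ) ≤ ((N.choose (i+1)):ℝ)),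
        abs_of_nonneg (by positivity)]
    rw [habs]
    have e1 : ((N.choose (i+1)):ℝ) * t^(i+1) / (((N:ℝ)+1)^(i+1) * (i.factorial:ℝ))
        = (((N.choose (i+1)):ℝ) / ((N:ℝ)+1)^(i+1)) * (t^(i+1) / (i.factorial:ℝ)) :=
      (mul_div_mul_comm _ _ _ _)
    rw [e1]
    have h1 : t^(i+1) ≤ M^(i+1) := pow_le_pow_left₀ ht0 htM _
    calc (((N.choose (i+1)):ℝ) / ((N:ℝ)+1)^(i+1)) * (t^(i+1) / (i.factorial:ℝ))
        ≤ (1/((i+1).factorial:ℝ)) * (M^(i+1) / (i.factorial:ℝ)) := by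
          gcongr
      _ ≤ 1 * (M^(i+1) / (i.factorial:ℝ)) := by
          apply mul_le_mul_of_nonneg_right _ (by positivity)
          rw [div_le_one (by positivity)]; exact hfp1
      _ = M * (M^i / (i.factorial:ℝ)) := by rw [pow_succ]; ring
  -- bound |a i - term i| for i < N
  have b3 : ∀ i ∈ Finset.range N, |a i - term i|
      ≤ (((i:ℝ)+2) * M^(i+1) / ((i.factorial:ℝ))^2) / (2*((N:ℝ)+1)) := by
    intro i hi
    rw [Finset.mem_range] at hi
    obtain ⟨hc1, hc2⟩ := aux_coeff_bound N i hi
    have hfp : (0:ℝ) < (i.factorial:ℝ) := by positivity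
    have hfp' : (0:ℝ) < ((i+1).factorial:ℝ) := by positivity
    have hNp : (0:ℝ) < ((N:ℝ)+1)^(i+1) := by positivity
    have e1 : a i - term i = (-1:ℝ)^i * (t^(i+1)/(i.factorial:ℝ))
        * (1/((i+1).factorial:ℝ) - ((N.choose (i+1)):ℝ)/(((N:ℝ)+1)^(i+1))) := by
      rw [ha, hterm]
      field_simp
    rw [e1, abs_mul, abs_mul, abs_pow, abs_neg, abs_one, one_pow, one_mul,
      abs_of_nonneg (by positivity : (0:ℝ) ≤ t^(i+1)/(i.factorial:ℝ)),
      abs_of_nonneg (by linarith : (0:ℝ) ≤ 1/((i+1).factorial:ℝ) - ((N.choose (i+1)):ℝ)/(((N:ℝ)+1)^(i+1)))]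
    have h1 : t^(i+1) ≤ M^(i+1) := pow_le_pow_left₀ ht0 htM _
    calc (t^(i+1)/(i.factorial:ℝ)) * (1/((i+1).factorial:ℝ) - ((N.choose (i+1)):ℝ)/(((N:ℝ)+1)^(i+1)))
        ≤ (M^(i+1)/(i.factorial:ℝ)) * (((i:ℝ)+2)/(2*((N:ℝ)+1)*(i.factorial:ℝ))) := by
          gcongr
      _ = (((i:ℝ)+2) * M^(i+1) / ((i.factorial:ℝ))^2) / (2*((N:ℝ)+1)) := by
          field_simp
  -- summabilities
  have hsa_abs : Summable (fun i : ℕ => |a i|) :=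
    Summable.of_nonneg_of_le (fun i => abs_nonneg _) b1 (hsum_exp.mul_left M)
  have hsa : Summable a := hsa_abs.of_abs
  have hsplit := Summable.sum_add_tsum_nat_add (f := a) N hsa
  set S := ∑ i ∈ Finset.range N, term i with hS
  set T := ∑' i : ℕ, a (i + N) with hT
  have hG : (∑' i : ℕ, a i) = (∑ i ∈ Finset.range N, a i) + T := hsplit.symm
  -- |S| ≤ M * Cexp
  have hSb : |S| ≤ M * (∑' i:ℕ, M^i/(i.factorial:ℝ)) := by
    calc |S| ≤ ∑ i ∈ Finset.range N, |term i| := Finset.abs_sum_le_sum_abs _ _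
      _ ≤ ∑ i ∈ Finset.range N, M * (M^i / (i.factorial:ℝ)) := Finset.sum_le_sum b2
      _ ≤ ∑' i:ℕ, M * (M^i / (i.factorial:ℝ)) :=
          Summable.sum_le_tsum _ (fun i _ => by positivity) (hsum_exp.mul_left M)
      _ = M * (∑' i:ℕ, M^i/(i.factorial:ℝ)) := tsum_mul_left
  -- |T| bound
  have htail_sum : Summable (fun i : ℕ => M * (M^(i+N) / ((i+N).factorial:ℝ))) :=
    (((summable_nat_add_iff N).2 hsum_exp)).mul_left M
  have hTb : |T| ≤ M * (∑' i:ℕ, M^(i+N)/(((i+N).factorial:ℝ))) := by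
    have h1 : |T| ≤ ∑' i : ℕ, |a (i + N)| := by
      rw [hT]
      have := norm_tsum_le_tsum_norm (f := fun i => a (i + N))
        (by simpa [Real.norm_eq_abs] using (summable_nat_add_iff N).2 hsa_abs)
      simpa [Real.norm_eq_abs] using this
    refine h1.trans ?_
    calc (∑' i : ℕ, |a (i + N)|) ≤ ∑' i:ℕ, M * (M^(i+N)/(((i+N).factorial:ℝ))) :=
        Summable.tsum_le_tsum (fun i => b1 (i+N)) ((summable_nat_add_iff N).2 hsa_abs) htail_sum
      _ = M * (∑' i:ℕ, M^(i+N)/(((i+N).factorial:ℝ))) := tsum_mul_left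
  -- |sum of a - S|
  have hC1sum : Summable (fun i : ℕ => ((i:ℝ)+2) * M^(i+1) / ((i.factorial:ℝ))^2) := by
    have hle : ∀ i : ℕ, ((i:ℝ)+2) * M^(i+1) / ((i.factorial:ℝ))^2
        ≤ (2*M) * ((2*M)^i / (i.factorial:ℝ)) := by
      intro i
      have h2p : ((i:ℝ)+2) ≤ 2^(i+1) := by
        have : i+2 ≤ 2^(i+1) := by
          have := Nat.lt_two_pow_self (n := i+1)
          omega
        exact_mod_cast this
      have hfp : (1:ℝ) ≤ (i.factorial:ℝ) := by exact_mod_cast Nat.one_le_iff_ne_zero.mpr (Nat.factorial_ne_zero _)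
      calc ((i:ℝ)+2) * M^(i+1) / ((i.factorial:ℝ))^2
          ≤ 2^(i+1) * M^(i+1) / ((i.factorial:ℝ) * 1) := by
            gcongr
            nlinarith
        _ = (2*M) * ((2*M)^i / (i.factorial:ℝ)) := by rw [mul_pow]; rw [pow_succ, pow_succ]; ring
    exact Summable.of_nonneg_of_le (fun i => by positivity) hle
      ((Real.summable_pow_div_factorial (2*M)).mul_left (2*M))
  have hfinb : (∑ i ∈ Finset.range N, a i) - S
      = ∑ i ∈ Finset.range N, (a i - term i) := by
    rw [hS, Finset.sum_sub_distrib]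
  have hfin : |(∑ i ∈ Finset.range N, a i) - S|
      ≤ (∑' i:ℕ, ((i:ℝ)+2) * M^(i+1) / ((i.factorial:ℝ))^2)/(2*((N:ℝ)+1)) := by
    rw [hfinb]
    calc |∑ i ∈ Finset.range N, (a i - term i)|
        ≤ ∑ i ∈ Finset.range N, |a i - term i| := Finset.abs_sum_le_sum_abs _ _
      _ ≤ ∑ i ∈ Finset.range N, (((i:ℝ)+2) * M^(i+1) / ((i.factorial:ℝ))^2) / (2*((N:ℝ)+1)) :=
          Finset.sum_le_sum b3
      _ = (∑ i ∈ Finset.range N, ((i:ℝ)+2) * M^(i+1) / ((i.factorial:ℝ))^2) / (2*((N:ℝ)+1)) := by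
          rw [Finset.sum_div]
      _ ≤ (∑' i:ℕ, ((i:ℝ)+2) * M^(i+1) / ((i.factorial:ℝ))^2)/(2*((N:ℝ)+1)) := by
          gcongr
          exact Summable.sum_le_tsum _ (fun i _ => by positivity) hC1sum
  -- exp bound
  set u := t/((N:ℝ)+1) with hu
  have hu0 : 0 ≤ u := by positivity
  have hexple : Real.exp (-u/2) ≤ 1 := Real.exp_le_one_iff.mpr (by linarith)
  have hexp0 : 0 < Real.exp (-u/2) := Real.exp_pos _
  have hexp1 : 1 - Real.exp (-u/2) ≤ M/(2*((N:ℝ)+1)) := by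
    have h1 := Real.add_one_le_exp (-u/2)
    have h2 : u/2 ≤ M/(2*((N:ℝ)+1)) := by
      rw [hu, div_div, mul_comm ((N:ℝ)+1) 2]
      gcongr
    linarith
  -- final assembly
  have hdecomp : (∑' i : ℕ, a i) - Real.exp (-u/2) * S
      = ((∑ i ∈ Finset.range N, a i) - S) + T + (1 - Real.exp (-u/2)) * S := by
    rw [hG]; ring
  calc |(∑' i : ℕ, a i) - Real.exp (-u/2) * S|
      ≤ |(∑ i ∈ Finset.range N, a i) - S| + |T| + |1 - Real.exp (-u/2)| * |S| := by
        rw [hdecomp]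
        refine (abs_add_le _ _).trans ?_
        gcongr
        · exact abs_add_le _ _
        · rw [abs_mul]
    _ ≤ (∑' i:ℕ, ((i:ℝ)+2) * M^(i+1) / ((i.factorial:ℝ))^2)/(2*((N:ℝ)+1))
        + M * (∑' i:ℕ, M^(i+N)/(((i+N).factorial:ℝ)))
        + (M/(2*((N:ℝ)+1))) * (M * (∑' i:ℕ, M^i/(i.factorial:ℝ))) := by
        have hlast : |1 - Real.exp (-u/2)| * |S|
            ≤ (M/(2*((N:ℝ)+1))) * (M * (∑' i:ℕ, M^i/(i.factorial:ℝ))) := by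
          apply mul_le_mul _ hSb (abs_nonneg _) (by positivity)
          rw [abs_of_nonneg (by linarith)]
          exact hexp1
        exact add_le_add (add_le_add hfin hTb) hlast


theorem grushin_cylinder_eigenfunction_degeneration (lam : ℝ) (hlam : 0 < lam)
    (n : ℕ → ℕ) (hn : ∀ j : ℕ, n j = 2 * j)
    (b : ℕ → ℝ) (hb : ∀ j : ℕ, b j = lam / (4 * ((n j : ℝ) + 1)))
    (f : ℕ → ℝ → ℝ)
    (hf : ∀ j : ℕ, ∀ x : ℝ, f j x =
      b j * x ^ 2 * Real.exp (-(b j * x ^ 2) / 2) *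
        ∑ i ∈ Finset.range (n j),
          (-1 : ℝ) ^ i * ((n j).choose (n j - 1 - i)) * (b j * x ^ 2) ^ i / i.factorial)
    (J1 : ℝ → ℝ)
    (hJ1 : ∀ y : ℝ, J1 y = ∑' m : ℕ,
      (-1 : ℝ) ^ m * (y / 2) ^ (2 * m + 1) / (m.factorial * (m + 1).factorial)) :
    ∀ K : Set ℝ, IsCompact K → K ⊆ Set.Ici 0 →
      TendstoUniformlyOn f
        (fun x : ℝ => Real.sqrt lam * x / 2 * J1 (Real.sqrt lam * x)) atTop K := by
  intro K hK hKsub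
  obtain ⟨R, hR0, hRK⟩ : ∃ R : ℝ, 0 ≤ R ∧ ∀ x ∈ K, x ≤ R := by
    obtain ⟨r, hr⟩ := hK.isBounded.subset_closedBall 0
    refine ⟨max r 0, le_max_right _ _, fun x hx => ?_⟩
    have h1 : |x| ≤ r := by simpa [Real.dist_eq] using hr hx
    exact le_trans (le_abs_self x) (h1.trans (le_max_left _ _))
  set M := lam * R^2/4 with hM
  have hM0 : 0 ≤ M := by positivity
  -- rewrite the limit function as a power series in t = lam x^2/4
  have hg : ∀ x ∈ K, Real.sqrt lam * x / 2 * J1 (Real.sqrt lam * x)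
      = ∑' i:ℕ, (-1:ℝ)^i * (lam*x^2/4)^(i+1) / ((i.factorial:ℝ) * ((i+1).factorial:ℝ)) := by
    intro x hx
    rw [hJ1, ← tsum_mul_left]
    congr 1; funext m
    set Z := Real.sqrt lam * x / 2 with hZ
    have hy2 : (lam * x^2/4) = Z^2 := by
      rw [hZ, div_pow, mul_pow, Real.sq_sqrt hlam.le]; ring
    rw [hy2, ← pow_mul]
    ring
  -- the error bound
  set B : ℕ → ℝ := fun j =>
    (∑' i:ℕ, ((i:ℝ)+2) * M^(i+1) / ((i.factorial:ℝ))^2)/(2*((n j:ℝ)+1))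
      + M * (∑' i:ℕ, M^(i+(n j))/(((i+(n j)).factorial:ℝ)))
      + (M/(2*((n j:ℝ)+1))) * (M * (∑' i:ℕ, M^i/(i.factorial:ℝ))) with hB
  -- pointwise estimate
  have key : ∀ j : ℕ, ∀ x ∈ K,
      |Real.sqrt lam * x / 2 * J1 (Real.sqrt lam * x) - f j x| ≤ B j := by
    intro j x hx
    have hx0 : 0 ≤ x := hKsub hx
    set N := n j with hN
    have hN1 : (0:ℝ) < (N:ℝ)+1 := by positivity
    set t := lam * x^2/4 with ht
    have ht0 : 0 ≤ t := by positivity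
    have htM : t ≤ M := by
      rw [ht, hM]
      gcongr
      exact hRK x hx
    have hbx : b j * x^2 = t/((N:ℝ)+1) := by
      rw [hb j, ht, ← hN]
      field_simp
      try ring
    have hfeq : f j x = Real.exp (-(t/((N:ℝ)+1))/2) * ∑ i ∈ Finset.range N,
        ((-1:ℝ)^i * ((N.choose (i+1)):ℝ) * t^(i+1) / (((N:ℝ)+1)^(i+1) * (i.factorial:ℝ))) := by
      rw [hf j x, hbx, ← hN, Finset.mul_sum, Finset.mul_sum]
      apply Finset.sum_congr rfl
      intro i hi
      rw [Finset.mem_range] at hi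
      have h1 : N - 1 - i = N - (i+1) := by omega
      rw [h1, Nat.choose_symm (by omega : i+1 ≤ N)]
      have hfi : ((i.factorial:ℝ)) ≠ 0 := by positivity
      rw [div_pow, pow_succ, pow_succ]
      field_simp
      try ring
    rw [hg x hx, hfeq]
    exact aux_key M t hM0 ht0 htM N
  -- B tends to 0
  have hnat : Tendsto n atTop atTop := by
    have h0 : ∀ j : ℕ, j ≤ n j := fun j => by rw [hn]; omega
    exact tendsto_atTop_mono h0 tendsto_id
  have hNat : Tendsto (fun j => ((n j:ℝ)+1)) atTop atTop :=
    tendsto_atTop_add_const_right _ 1 (tendsto_natCast_atTop_atTop.comp hnat)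
  have hden : Tendsto (fun j => 2*((n j:ℝ)+1)) atTop atTop :=
    hNat.const_mul_atTop two_pos
  have hA : Tendsto (fun j => (∑' i:ℕ, ((i:ℝ)+2) * M^(i+1) / ((i.factorial:ℝ))^2)
      /(2*((n j:ℝ)+1))) atTop (𝓝 0) :=
    tendsto_const_nhds.div_atTop hden
  have hTl : Tendsto (fun j => M * (∑' i:ℕ, M^(i+(n j))/(((i+(n j)).factorial:ℝ))))
      atTop (𝓝 0) := by
    have h2 : Tendsto (fun N : ℕ => ∑' i:ℕ, M^(i+N)/(((i+N).factorial:ℝ))) atTop (𝓝 0) :=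
      tendsto_sum_nat_add (fun i => M^i/(i.factorial:ℝ))
    have h3 := (h2.comp hnat).const_mul M
    simpa using h3
  have hC : Tendsto (fun j => (M/(2*((n j:ℝ)+1))) * (M * (∑' i:ℕ, M^i/(i.factorial:ℝ))))
      atTop (𝓝 0) := by
    have h4 : Tendsto (fun j => M/(2*((n j:ℝ)+1))) atTop (𝓝 0) :=
      tendsto_const_nhds.div_atTop hden
    have h5 := h4.mul_const (M * (∑' i:ℕ, M^i/(i.factorial:ℝ)))
    simpa using h5
  have hB0 : Tendsto B atTop (𝓝 0) := by
    have := (hA.add hTl).add hC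
    simpa using this
  rw [Metric.tendstoUniformlyOn_iff]
  intro ε hε
  filter_upwards [hB0.eventually (gt_mem_nhds hε)] with j hj x hx
  rw [Real.dist_eq]
  exact lt_of_le_of_lt (key j x hx) hj
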